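/- Let f : ℝ^d → ℝ be continuous and bounded below with exp(-f/δ) ∈ L¹. Define the zeroth-order proximal operator zprox(x) = (∫ y exp(-f(y)/δ) exp(-‖x-y‖²/(2λδ)) dy) / (∫ exp(-f(y)/δ) exp(-‖x-y‖²/(2λδ)) dy). Then the soft Moreau envelope f^{λ,δ} is differentiable and zprox(x) = x - λ ∇f^{λ,δ}(x) for every x. -/

import Mathlib

open MeasureTheory Real

lemma texp_le {c : ℝ} (hc : 0 < c) (t : ℝ) (ht : 0 ≤ t) :
    t * Real.exp (-t ^ 2 / c) ≤ Real.sqrt c / 2 := by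
  have h1 : 1 + t ^ 2 / c ≤ Real.exp (t ^ 2 / c) := by
    linarith [Real.add_one_le_exp (t ^ 2 / c)]
  have hpos : (0:ℝ) < 1 + t ^ 2 / c := by positivity
  have h2 : Real.exp (-t ^ 2 / c) ≤ (1 + t ^ 2 / c)⁻¹ := by
    rw [show -t ^ 2 / c = -(t ^ 2 / c) by ring, Real.exp_neg]
    exact inv_anti₀ hpos h1
  have h3 : t * (1 + t ^ 2 / c)⁻¹ ≤ Real.sqrt c / 2 := by
    rw [mul_inv_le_iff₀' hpos]
    have h4 : 2 * t * Real.sqrt c ≤ c + t ^ 2 := by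
      nlinarith [sq_nonneg (t - Real.sqrt c), Real.sq_sqrt hc.le]
    have h5 : t ^ 2 / c * c = t ^ 2 := div_mul_cancel₀ _ hc.ne'
    have hs : 0 < Real.sqrt c := Real.sqrt_pos.2 hc
    nlinarith [Real.sq_sqrt hc.le, mul_le_mul_of_nonneg_right h4 hs.le]
  calc t * Real.exp (-t ^ 2 / c) ≤ t * (1 + t ^ 2 / c)⁻¹ :=
        mul_le_mul_of_nonneg_left h2 ht
    _ ≤ _ := h3

set_option maxHeartbeats 2000000 in
set_option synthInstance.maxHeartbeats 400000 in
/-- The soft Moreau envelope is differentiable and the zeroth-order proximal operator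
satisfies `zprox(x) = x - λ ∇f^{λ,δ}(x)`. -/
theorem zprox_eq_sub_grad_softMoreau {d : ℕ}
    (f : EuclideanSpace ℝ (Fin d) → ℝ) (hf : Continuous f)
    (hbdd : ∃ c : ℝ, ∀ x, c ≤ f x)
    (δ lam : ℝ) (hδ : 0 < δ) (hlam : 0 < lam)
    (hint : Integrable (fun y : EuclideanSpace ℝ (Fin d) => Real.exp (-f y / δ)))
    (Z : EuclideanSpace ℝ (Fin d) → ℝ)
    (hZ : ∀ x, Z x = ∫ y : EuclideanSpace ℝ (Fin d),
        Real.exp (-f y / δ) * Real.exp (-‖x - y‖ ^ 2 / (2 * lam * δ)))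
    (F : EuclideanSpace ℝ (Fin d) → ℝ)
    (hF : ∀ x, F x = -δ * Real.log ((2 * Real.pi * lam * δ) ^ (-(d : ℝ) / 2) * Z x))
    (zprox : EuclideanSpace ℝ (Fin d) → EuclideanSpace ℝ (Fin d))
    (hzprox : ∀ x, zprox x = (Z x)⁻¹ •
        ∫ y : EuclideanSpace ℝ (Fin d),
          (Real.exp (-f y / δ) * Real.exp (-‖x - y‖ ^ 2 / (2 * lam * δ))) • y) :
    ∀ x : EuclideanSpace ℝ (Fin d),
      DifferentiableAt ℝ F x ∧ zprox x = x - lam • gradient F x := by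
  intro x
  set c : ℝ := 2 * lam * δ with hcdef
  have hc : 0 < c := by positivity
  set w : EuclideanSpace ℝ (Fin d) → EuclideanSpace ℝ (Fin d) → ℝ := fun x' y => Real.exp (-f y / δ) * Real.exp (-‖x' - y‖ ^ 2 / c)
    with hwdef
  -- basic facts about w
  have hw_pos : ∀ (x' y : EuclideanSpace ℝ (Fin d)), 0 < w x' y := fun x' y => mul_pos (Real.exp_pos _) (Real.exp_pos _)
  have hw_le : ∀ (x' y : EuclideanSpace ℝ (Fin d)), w x' y ≤ Real.exp (-f y / δ) := by
    intro x' y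
    have : Real.exp (-‖x' - y‖ ^ 2 / c) ≤ 1 := by
      apply Real.exp_le_one_iff.2
      rw [neg_div]
      exact neg_nonpos.2 (div_nonneg (sq_nonneg _) hc.le)
    calc w x' y ≤ Real.exp (-f y / δ) * 1 :=
          mul_le_mul_of_nonneg_left this (Real.exp_pos _).le
      _ = _ := mul_one _
  have hw_cont : ∀ x' : EuclideanSpace ℝ (Fin d), Continuous (w x') := by
    intro x'
    exact ((hf.neg.div_const δ).rexp).mul
      ((((continuous_const.sub continuous_id).norm.pow 2).neg.div_const c).rexp)
  have hw_meas : ∀ x' : EuclideanSpace ℝ (Fin d), AEStronglyMeasurable (w x') volume :=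
    fun x' => (hw_cont x').aestronglyMeasurable
  have hw_int : ∀ x' : EuclideanSpace ℝ (Fin d), Integrable (w x') volume := by
    intro x'
    refine hint.mono (hw_meas x') (Filter.Eventually.of_forall fun y => ?_)
    rw [Real.norm_eq_abs, Real.norm_eq_abs, abs_of_pos (hw_pos x' y),
      abs_of_pos (Real.exp_pos _)]
    exact hw_le x' y
  -- positivity of Z
  have hZx_pos : 0 < Z x := by
    rw [hZ]
    rw [(integral_pos_iff_support_of_nonneg (fun y => (hw_pos x y).le) (hw_int x))]
    have : Function.support (w x) = Set.univ :=
      Set.eq_univ_of_forall fun y => (hw_pos x y).ne'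
    rw [this]
    exact isOpen_univ.measure_pos volume Set.univ_nonempty
  -- pointwise derivative of w in its first argument
  have hderiv : ∀ (y x' : EuclideanSpace ℝ (Fin d)),
      HasFDerivAt (fun z => w z y) (((-2 / c) * w x' y) • innerSL ℝ (x' - y)) x' := by
    intro y x'
    have hsq := ((hasFDerivAt_id x').sub_const y).norm_sq
    have hdivc := hsq.neg.mul_const c⁻¹
    have hexp := hdivc.exp
    have hmul := hexp.const_mul (Real.exp (-f y / δ))
    refine hmul.congr_fderiv ?_
    ext z
    simp [hwdef, smul_smul]
    ring
  -- the bound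
  set bound : EuclideanSpace ℝ (Fin d) → ℝ :=
    fun y => (Real.sqrt c / c) * Real.exp (-f y / δ) with hbounddef
  have hbound_int : Integrable bound := hint.const_mul _
  have hns : ∀ (a : ℝ) (L : EuclideanSpace ℝ (Fin d) →L[ℝ] ℝ), ‖a • L‖ = |a| * ‖L‖ := by
    intro a L
    rw [← Real.norm_eq_abs]; exact norm_smul a L
  have h_bound : ∀ (y x' : EuclideanSpace ℝ (Fin d)),
      ‖((-2 / c) * w x' y) • innerSL ℝ (x' - y)‖ ≤ bound y := by
    intro y x'
    have hb : w x' y * ‖x' - y‖ ≤ Real.exp (-f y / δ) * (Real.sqrt c / 2) := by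
      have ht := texp_le hc ‖x' - y‖ (norm_nonneg _)
      calc w x' y * ‖x' - y‖
          = Real.exp (-f y / δ) * (‖x' - y‖ * Real.exp (-‖x' - y‖ ^ 2 / c)) := by
            simp [hwdef]; ring
        _ ≤ _ := mul_le_mul_of_nonneg_left ht (Real.exp_pos _).le
    rw [hns, innerSL_apply_norm, abs_mul, abs_div, abs_neg,
      abs_two, abs_of_pos hc, abs_of_pos (hw_pos x' y)]
    calc 2 / c * w x' y * ‖x' - y‖ = 2 / c * (w x' y * ‖x' - y‖) := by ring
      _ ≤ 2 / c * (Real.exp (-f y / δ) * (Real.sqrt c / 2)) :=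
          mul_le_mul_of_nonneg_left hb (by positivity)
      _ = bound y := by rw [hbounddef]; field_simp
  -- integrability of the vector integrands
  have hI1 : Integrable (fun y : EuclideanSpace ℝ (Fin d) => w x y • (x - y)) := by
    refine (hint.const_mul (Real.sqrt c / 2)).mono
      (((hw_cont x).smul (continuous_const.sub continuous_id)).aestronglyMeasurable)
      (Filter.Eventually.of_forall fun y => ?_)
    rw [norm_smul, Real.norm_eq_abs, abs_of_pos (hw_pos x y), Real.norm_eq_abs,
      abs_mul, abs_of_pos (Real.exp_pos _), abs_of_pos (by positivity : (0:ℝ) < Real.sqrt c / 2)]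
    have ht := texp_le hc ‖x - y‖ (norm_nonneg _)
    calc w x y * ‖x - y‖
        = Real.exp (-f y / δ) * (‖x - y‖ * Real.exp (-‖x - y‖ ^ 2 / c)) := by
          simp [hwdef]; ring
      _ ≤ Real.exp (-f y / δ) * (Real.sqrt c / 2) :=
          mul_le_mul_of_nonneg_left ht (Real.exp_pos _).le
      _ = Real.sqrt c / 2 * Real.exp (-f y / δ) := by ring
  have hI2 : Integrable (fun y : EuclideanSpace ℝ (Fin d) => w x y • y) := by
    refine (hint.const_mul (Real.sqrt c / 2 + ‖x‖)).mono
      (((hw_cont x).smul continuous_id).aestronglyMeasurable)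
      (Filter.Eventually.of_forall fun y => ?_)
    rw [norm_smul, Real.norm_eq_abs, abs_of_pos (hw_pos x y), Real.norm_eq_abs,
      abs_mul, abs_of_pos (Real.exp_pos _),
      abs_of_nonneg (by positivity : (0:ℝ) ≤ Real.sqrt c / 2 + ‖x‖)]
    have ht := texp_le hc ‖x - y‖ (norm_nonneg _)
    have hy : ‖y‖ ≤ ‖x - y‖ + ‖x‖ := by
      calc ‖y‖ = ‖y - x + x‖ := by rw [sub_add_cancel]
        _ ≤ ‖y - x‖ + ‖x‖ := norm_add_le _ _
        _ = ‖x - y‖ + ‖x‖ := by rw [norm_sub_rev]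
    calc w x y * ‖y‖ ≤ w x y * (‖x - y‖ + ‖x‖) :=
          mul_le_mul_of_nonneg_left hy (hw_pos x y).le
      _ = Real.exp (-f y / δ) * (‖x - y‖ * Real.exp (-‖x - y‖ ^ 2 / c))
          + w x y * ‖x‖ := by simp [hwdef]; ring
      _ ≤ Real.exp (-f y / δ) * (Real.sqrt c / 2) + Real.exp (-f y / δ) * ‖x‖ :=
          add_le_add (mul_le_mul_of_nonneg_left ht (Real.exp_pos _).le)
            (mul_le_mul_of_nonneg_right (hw_le x y) (norm_nonneg _))
      _ = (Real.sqrt c / 2 + ‖x‖) * Real.exp (-f y / δ) := by ring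
  have hIv : Integrable (fun y : EuclideanSpace ℝ (Fin d) =>
      ((-2 / c) * w x y) • (x - y)) := by
    have : (fun y : EuclideanSpace ℝ (Fin d) => ((-2 / c) * w x y) • (x - y))
        = fun y => (-2 / c) • (w x y • (x - y)) := by
      funext y; rw [mul_smul]
    rw [this]
    exact hI1.smul (-2 / c)
  -- fderiv of Z via dominated convergence
  set v : EuclideanSpace ℝ (Fin d) :=
    ∫ y : EuclideanSpace ℝ (Fin d), ((-2 / c) * w x y) • (x - y) with hvdef
  have key : HasFDerivAt (fun x' => ∫ y : EuclideanSpace ℝ (Fin d), w x' y)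
      (∫ y : EuclideanSpace ℝ (Fin d), ((-2 / c) * w x y) • innerSL ℝ (x - y)) x := by
    apply hasFDerivAt_integral_of_dominated_of_fderiv_le (bound := bound) Filter.univ_mem
      (Filter.Eventually.of_forall fun x' => hw_meas x') (hw_int x)
    · exact ((continuous_const.mul (hw_cont x)).smul
        ((innerSL ℝ).continuous.comp (continuous_const.sub continuous_id))).aestronglyMeasurable
    · exact Filter.Eventually.of_forall fun y => fun x' _ => h_bound y x'
    · exact hbound_int
    · exact Filter.Eventually.of_forall fun y => fun x' _ => hderiv y x'
  have hint_eq : (∫ y : EuclideanSpace ℝ (Fin d), ((-2 / c) * w x y) • innerSL ℝ (x - y))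
      = innerSL ℝ v := by
    have h1 : ∀ y : EuclideanSpace ℝ (Fin d),
        ((-2 / c) * w x y) • innerSL ℝ (x - y) = innerSL ℝ (((-2 / c) * w x y) • (x - y)) :=
      fun y => (map_smul (innerSL ℝ) _ _).symm
    simp_rw [h1]
    exact ContinuousLinearMap.integral_comp_comm (innerSL ℝ) hIv
  rw [hint_eq] at key
  have hZfd : HasFDerivAt Z (innerSL ℝ v) x := by
    have hfun : Z = fun x' => ∫ y : EuclideanSpace ℝ (Fin d), w x' y := by
      funext x'; rw [hZ x']
    rw [hfun]
    exact key
  -- chain rule for F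
  set C : ℝ := (2 * Real.pi * lam * δ) ^ (-(d : ℝ) / 2) with hCdef
  have hC : 0 < C := Real.rpow_pos_of_pos (by positivity) _
  have hFd : HasFDerivAt F (innerSL ℝ ((-δ * (Z x)⁻¹) • v)) x := by
    have h0 : HasFDerivAt (fun x' => C * Z x') (C • innerSL ℝ v) x := hZfd.const_mul C
    have h1 : HasFDerivAt (fun x' => Real.log (C * Z x'))
        ((C * Z x)⁻¹ • (C • innerSL ℝ v)) x := h0.log (mul_pos hC hZx_pos).ne'
    have h2 := h1.const_mul (-δ)
    have hfun : F = fun x' => -δ * Real.log (C * Z x') := funext hF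
    rw [hfun]
    convert h2 using 1
    all_goals
      ext z
      try simp [smul_smul, mul_inv]
      try field_simp
      try ring
      try simp
  refine ⟨hFd.differentiableAt, ?_⟩
  have hgrad : gradient F x = (-δ * (Z x)⁻¹) • v := by
    have hg : HasGradientAt F ((-δ * (Z x)⁻¹) • v) x := by
      rw [hasGradientAt_iff_hasFDerivAt]
      convert hFd using 1
      all_goals
        ext z
        try simp [InnerProductSpace.toDual_apply_apply]
    exact hg.gradient
  -- final algebra
  have hv : v = (-2 / c) • ∫ y : EuclideanSpace ℝ (Fin d), w x y • (x - y) := by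
    rw [hvdef]
    simp_rw [mul_smul]
    exact integral_smul _ _
  have hI3 : Integrable (fun y : EuclideanSpace ℝ (Fin d) => w x y • x) :=
    (hw_int x).smul_const x
  have hsplit : (∫ y : EuclideanSpace ℝ (Fin d), w x y • (x - y))
      = (Z x) • x - ∫ y : EuclideanSpace ℝ (Fin d), w x y • y := by
    have h1 : ∀ y : EuclideanSpace ℝ (Fin d), w x y • (x - y) = w x y • x - w x y • y :=
      fun y => smul_sub _ _ _
    simp_rw [h1]
    rw [integral_sub hI3 hI2, integral_smul_const]
    congr 1
    rw [hZ x]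
  rw [hzprox x, hgrad, hv, hsplit, smul_smul, smul_smul]
  have hscal : lam * (-δ * (Z x)⁻¹) * (-2 / c) = (Z x)⁻¹ := by
    rw [hcdef]
    field_simp
  rw [hscal, smul_sub, smul_smul, inv_mul_cancel₀ hZx_pos.ne', one_smul]
  simp [hwdef]
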